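/- Let t ≥ 2 and let Y be a one-sided ladder with no lower inside corners and upper inside corners (c_1,d_1),…,(c_k,d_k) (conventions (c_0,d_0)=(1,n), (c_{k+1},d_{k+1})=(m,1)), and assume Y contains at least one t×t minor. Set j_1 = max{j : c_j < t} and j_2 = min{j : d_j < t}. Then j_1 < j_2; the set Y' = {(i,j) ∈ Y : i ≤ c_{j_2} and j ≤ d_{j_1}} is a one-sided t-connected ladder; the set Z = Y ∖ Y' contains no t×t minor of Y; and R_t(Y) is isomorphic as a k-algebra to the polynomial ring over R_t(Y') in the variables indexed by Z. -/

import Mathlib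

set_option maxHeartbeats 1000000
set_option synthInstance.maxHeartbeats 1000000

open CategoryTheory

namespace LadderDet

/-- The position `p` lies in the `m × n` grid `{1,…,m} × {1,…,n}`. -/
def InGrid (m n : ℕ) (p : ℕ × ℕ) : Prop :=
  1 ≤ p.1 ∧ p.1 ≤ m ∧ 1 ≤ p.2 ∧ p.2 ≤ n

/-- `Y` is a ladder in the `m × n` grid. -/
def IsLadder (m n : ℕ) (Y : Set (ℕ × ℕ)) : Prop :=
  (∀ p ∈ Y, InGrid m n p) ∧
  ∀ i j p q : ℕ, (i, j) ∈ Y → (p, q) ∈ Y → i ≤ p → j ≤ q → (i, q) ∈ Y ∧ (p, j) ∈ Y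

/-- A ladder together with the standard nontriviality assumptions:
`(1,n), (m,1) ∈ Y` and every row and every column of the grid meets `Y`. -/
def StdLadder (m n : ℕ) (Y : Set (ℕ × ℕ)) : Prop :=
  IsLadder m n Y ∧ (1, n) ∈ Y ∧ (m, 1) ∈ Y ∧
  (∀ i, 1 ≤ i → i ≤ m → ∃ j, (i, j) ∈ Y) ∧
  (∀ j, 1 ≤ j → j ≤ n → ∃ i, (i, j) ∈ Y)

/-- Two positions differ by exactly `1` in exactly one coordinate. -/
def AdjStep (p q : ℕ × ℕ) : Prop :=
  (p.1 = q.1 ∧ (p.2 + 1 = q.2 ∨ q.2 + 1 = p.2)) ∨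
  (p.2 = q.2 ∧ (p.1 + 1 = q.1 ∨ q.1 + 1 = p.1))

/-- There is a path in `Y` from `p` to `q`. -/
def HasPath (Y : Set (ℕ × ℕ)) (p q : ℕ × ℕ) : Prop :=
  p ∈ Y ∧ q ∈ Y ∧
    Relation.ReflTransGen (fun a b => a ∈ Y ∧ b ∈ Y ∧ AdjStep a b) p q

/-- `Y` is path-connected. -/
def PathConnected (Y : Set (ℕ × ℕ)) : Prop :=
  ∀ p ∈ Y, ∀ q ∈ Y, HasPath Y p q

/-- `M` is (the set of entries of) a `t × t` minor of `Y`. -/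
def IsMinor (t : ℕ) (Y : Set (ℕ × ℕ)) (M : Set (ℕ × ℕ)) : Prop :=
  ∃ r c : Fin t → ℕ, StrictMono r ∧ StrictMono c ∧
    (∀ u v, (r u, c v) ∈ Y) ∧ M = {p | ∃ u v, p = (r u, c v)}

/-- `Y` is `t`-disconnected. -/
def TDisconnected (m n t : ℕ) (Y : Set (ℕ × ℕ)) : Prop :=
  ∃ Z₁ Z₂ : Set (ℕ × ℕ), Z₁.Nonempty ∧ Z₂.Nonempty ∧
    IsLadder m n Z₁ ∧ IsLadder m n Z₂ ∧ Z₁ ∩ Z₂ = ∅ ∧ Z₁ ∪ Z₂ = Y ∧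
    ∀ M, IsMinor t Y M → M ⊆ Z₁ ∨ M ⊆ Z₂

/-- `Y` is `t`-connected. -/
def TConnected (m n t : ℕ) (Y : Set (ℕ × ℕ)) : Prop := ¬ TDisconnected m n t Y

/-- `p` is a lower inside corner of `Y`. -/
def IsLowerCorner (Y : Set (ℕ × ℕ)) (p : ℕ × ℕ) : Prop :=
  p ∈ Y ∧ (p.1 - 1, p.2) ∈ Y ∧ (p.1, p.2 - 1) ∈ Y ∧ (p.1 - 1, p.2 - 1) ∉ Y

/-- `p` is an upper inside corner of `Y`. -/
def IsUpperCorner (Y : Set (ℕ × ℕ)) (p : ℕ × ℕ) : Prop :=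
  p ∈ Y ∧ (p.1 + 1, p.2) ∈ Y ∧ (p.1, p.2 + 1) ∈ Y ∧ (p.1 + 1, p.2 + 1) ∉ Y

/-- `Y` is one-sided: path-connected and with no lower or no upper inside corners. -/
def OneSided (Y : Set (ℕ × ℕ)) : Prop :=
  PathConnected Y ∧
  ((∀ p, ¬ IsLowerCorner Y p) ∨ (∀ p, ¬ IsUpperCorner Y p))

/-- `Y` is two-sided: path-connected with at least one lower and one upper inside corner. -/
def TwoSided (Y : Set (ℕ × ℕ)) : Prop :=
  PathConnected Y ∧ (∃ p, IsLowerCorner Y p) ∧ (∃ p, IsUpperCorner Y p)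

section Algebra

variable (k : Type) [Field k]

/-- The `t × t` minor of the generic matrix determined by rows `r` and columns `c`,
as an element of the polynomial ring `k[Y]`. -/
noncomputable def minorPoly {t : ℕ} {Y : Set (ℕ × ℕ)} (r c : Fin t → ℕ)
    (h : ∀ u v, (r u, c v) ∈ Y) : MvPolynomial Y k :=
  (Matrix.of fun u v : Fin t =>
    (MvPolynomial.X ⟨(r u, c v), h u v⟩ : MvPolynomial Y k)).det

/-- The ideal `I_t(Y) ⊆ k[Y]` generated by all `t × t` minors of `X` lying in `Y`. -/
noncomputable def minorIdeal (t : ℕ) (Y : Set (ℕ × ℕ)) : Ideal (MvPolynomial Y k) :=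
  Ideal.span {f | ∃ (r c : Fin t → ℕ) (_ : StrictMono r) (_ : StrictMono c)
    (h : ∀ u v, (r u, c v) ∈ Y), f = minorPoly k r c h}

/-- The ladder determinantal ring `R_t(Y) = k[Y]/I_t(Y)`. -/
abbrev LadderRing (t : ℕ) (Y : Set (ℕ × ℕ)) : Type :=
  MvPolynomial Y k ⧸ minorIdeal k t Y

/-- The residue `x_{ij}` of the variable `X_{ij}` in `R_t(Y)`. -/
noncomputable def xres (t : ℕ) {Y : Set (ℕ × ℕ)} (p : ℕ × ℕ) (hp : p ∈ Y) :
    LadderRing k t Y :=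
  Ideal.Quotient.mk (minorIdeal k t Y) (MvPolynomial.X ⟨p, hp⟩)

/-- The ideal of `R_2(Y)` generated by the residues of the variables in row `r`
(an ideal of type `𝔮`). -/
noncomputable def rowIdeal (Y : Set (ℕ × ℕ)) (r : ℕ) : Ideal (LadderRing k 2 Y) :=
  Ideal.span {z | ∃ q, ∃ h : (r, q) ∈ Y, z = xres k 2 (r, q) h}

/-- The ideal of `R_2(Y)` generated by the residues of the variables in column `b`
(an ideal of type `𝔮'`). -/
noncomputable def colIdeal (Y : Set (ℕ × ℕ)) (b : ℕ) : Ideal (LadderRing k 2 Y) :=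
  Ideal.span {z | ∃ p, ∃ h : (p, b) ∈ Y, z = xres k 2 (p, b) h}

/-- The ideal `𝔭` of `R_2(Y)` generated by the residues of the variables weakly
northwest of the position `(c, d)`. -/
noncomputable def cornerIdeal (Y : Set (ℕ × ℕ)) (c d : ℕ) : Ideal (LadderRing k 2 Y) :=
  Ideal.span {z | ∃ p q, ∃ h : (p, q) ∈ Y, p ≤ c ∧ q ≤ d ∧ z = xres k 2 (p, q) h}

end Algebra

/-- An ideal of `k[Y]` is a monomial ideal if it is generated by monomials. -/
def IsMonomialIdeal {k : Type} [Field k] {Y : Set (ℕ × ℕ)}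
    (M : Ideal (MvPolynomial Y k)) : Prop :=
  ∃ S : Set (Y →₀ ℕ), M = Ideal.span ((fun d => MvPolynomial.monomial d (1 : k)) '' S)

/-- A finitely generated module `C` over a commutative ring `R` is semidualizing if
the natural homothety map `R → Hom_R(C, C)` is bijective and `Ext^i_R(C, C) = 0` for
all `i ≥ 1`. -/
def IsSemidualizing {R : Type} [CommRing R] (C : ModuleCat.{0} R) : Prop :=
  Module.Finite R C ∧
  Function.Bijective (LinearMap.lsmul R C) ∧
  ∀ i : ℕ, 1 ≤ i →
    Subsingleton (((Ext R (ModuleCat.{0} R) i).obj (Opposite.op C)).obj C)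

/-- `C` has finite injective dimension: for some `n`, `Ext^i_R(M, C) = 0` for all
modules `M` and all `i > n`. -/
def HasFiniteInjDim {R : Type} [CommRing R] (C : ModuleCat.{0} R) : Prop :=
  ∃ n : ℕ, ∀ i : ℕ, n < i → ∀ M : ModuleCat.{0} R,
    Subsingleton (((Ext R (ModuleCat.{0} R) i).obj (Opposite.op M)).obj C)


section Comb

variable {m n : ℕ} {Y : Set (ℕ × ℕ)}

lemma grid_of_mem (hY : StdLadder m n Y) {p : ℕ × ℕ} (hp : p ∈ Y) : InGrid m n p :=
  hY.1.1 p hp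

lemma rowConvex (hY : StdLadder m n Y) {x b y j : ℕ}
    (h1 : (x, b) ∈ Y) (h2 : (x, y) ∈ Y) (hbj : b ≤ j) (hjy : j ≤ y) : (x, j) ∈ Y := by
  have hb := grid_of_mem hY h1
  have hy := grid_of_mem hY h2
  obtain ⟨z, hz⟩ := hY.2.2.2.2 j (le_trans hb.2.2.1 hbj) (le_trans hjy hy.2.2.2)
  by_cases hzx : z ≤ x
  · exact (hY.1.2 z j x y hz h2 hzx hjy).2
  · exact (hY.1.2 x b z j h1 hz (le_of_lt (lt_of_not_ge hzx)) hbj).1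

lemma colConvex (hY : StdLadder m n Y) {x a y i : ℕ}
    (h1 : (a, x) ∈ Y) (h2 : (y, x) ∈ Y) (hai : a ≤ i) (hiy : i ≤ y) : (i, x) ∈ Y := by
  have ha := grid_of_mem hY h1
  have hy := grid_of_mem hY h2
  obtain ⟨w, hw⟩ := hY.2.2.2.1 i (le_trans ha.1 hai) (le_trans hiy hy.2.1)
  by_cases hwx : w ≤ x
  · exact (hY.1.2 i w y x hw h2 hiy hwx).1
  · exact (hY.1.2 a x i w h1 hw hai (le_of_lt (lt_of_not_ge hwx))).2

variable (hY : StdLadder m n Y) (hnolow : ∀ p, ¬ IsLowerCorner Y p)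

include hY hnolow in
lemma stepDown : ∀ (k x b y : ℕ), y - b ≤ k → b ≤ y →
    (x + 1, b) ∈ Y → (x + 1, y) ∈ Y → (x, y) ∈ Y → (x, b) ∈ Y := by
  intro k
  induction k with
  | zero =>
    intro x b y hk hby _ _ hxy
    obtain rfl : b = y := by omega
    exact hxy
  | succ k ih =>
    intro x b y hk hby h1 h2 h3
    rcases Nat.eq_or_lt_of_le hby with rfl | hlt
    · exact h3
    · have hb1 : 1 ≤ b := (grid_of_mem hY h1).2.2.1
      have hy1 : (x + 1, y - 1) ∈ Y := rowConvex hY h1 h2 (by omega) (by omega)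
      have hcorn := hnolow (x + 1, y)
      simp only [IsLowerCorner, not_and, not_not] at hcorn
      have hxy1 : (x, y - 1) ∈ Y := by
        have := hcorn h2 (by simpa using h3)
        simpa using this (by simpa using hy1)
      exact ih x b (y - 1) (by omega) (by omega) h1 hy1 hxy1

include hY hnolow in
lemma stepLeft : ∀ (k y a x : ℕ), x - a ≤ k → a ≤ x →
    (a, y + 1) ∈ Y → (x, y + 1) ∈ Y → (x, y) ∈ Y → (a, y) ∈ Y := by
  intro k
  induction k with
  | zero =>
    intro y a x hk hax _ _ hxy
    obtain rfl : a = x := by omega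
    exact hxy
  | succ k ih =>
    intro y a x hk hax h1 h2 h3
    rcases Nat.eq_or_lt_of_le hax with rfl | hlt
    · exact h3
    · have ha1 : 1 ≤ a := (grid_of_mem hY h1).1
      have hx1 : (x - 1, y + 1) ∈ Y := colConvex hY h1 h2 (by omega) (by omega)
      have hcorn := hnolow (x, y + 1)
      simp only [IsLowerCorner, not_and, not_not] at hcorn
      have hxy1 : (x - 1, y) ∈ Y := by
        have := hcorn h2 (by simpa using hx1)
        simpa using this (by simpa using h3)
      have : (x - 1, y + 1) ∈ Y := hx1
      exact ih y a (x - 1) (by omega) (by omega) h1 hx1 hxy1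

variable (hpath : PathConnected Y)

include hY hnolow hpath in
lemma meet_mem {a b u v : ℕ} (hA : (a, b) ∈ Y) (hB : (u, v) ∈ Y) :
    (min a u, min b v) ∈ Y := by
  obtain ⟨-, -, hp⟩ := hpath (a, b) hA (u, v) hB
  have key : ∀ C : ℕ × ℕ,
      Relation.ReflTransGen (fun a b => a ∈ Y ∧ b ∈ Y ∧ AdjStep a b) (a, b) C →
      (min a C.1, min b C.2) ∈ Y := by
    intro C hC
    induction hC with
    | refl => simpa using hA
    | tail hsteps hstep ih =>
      rename_i c c'
      obtain ⟨hc, hc', hadj⟩ := hstep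
      obtain ⟨x, y⟩ := c
      obtain ⟨x', y'⟩ := c'
      simp only [AdjStep] at hadj
      rcases hadj with ⟨h1, h2 | h2⟩ | ⟨h1, h2 | h2⟩
      · -- y' = y + 1, x' = x
        subst h1; subst h2
        rcases le_or_gt b y with hby | hby
        · have e : min b (y + 1) = min b y := by omega
          rw [e]; exact ih
        · have e1 : min b y = y := by omega
          have e2 : min b (y + 1) = y + 1 := by omega
          rw [e1] at ih; rw [e2]
          exact (hY.1.2 (min a x) y x (y + 1) ih hc' (min_le_right a x) (by omega)).1
      · -- y = y' + 1, x' = x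
        subst h1
        have hy : y = y' + 1 := by omega
        subst hy
        rcases le_or_gt b y' with hby | hby
        · have e1 : min b (y' + 1) = b := by omega
          have e2 : min b y' = b := by omega
          rw [e2]; rw [e1] at ih; exact ih
        · have e1 : min b (y' + 1) = y' + 1 := by omega
          have e2 : min b y' = y' := by omega
          rw [e1] at ih; rw [e2]
          exact stepLeft hY hnolow x y' (min a x) x (by omega) (min_le_right a x) ih hc hc'
      · -- x' = x + 1, y' = y
        subst h1; subst h2
        rcases le_or_gt a x with hax | hax
        · have : min a (x + 1) = min a x := by omega
          rw [this]; exact ih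
        · have e1 : min a x = x := by omega
          have e2 : min a (x + 1) = x + 1 := by omega
          rw [e1] at ih; rw [e2]
          exact (hY.1.2 x (min b y) (x + 1) y ih hc' (by omega) (min_le_right b y)).2
      · -- x = x' + 1, y' = y
        subst h1
        have hx : x = x' + 1 := by omega
        subst hx
        rcases le_or_gt a x' with hax | hax
        · have e1 : min a (x' + 1) = a := by omega
          have e2 : min a x' = a := by omega
          rw [e2]; rw [e1] at ih; exact ih
        · have e1 : min a (x' + 1) = x' + 1 := by omega
          have e2 : min a x' = x' := by omega
          rw [e1] at ih; rw [e2]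
          exact stepDown hY hnolow y x' (min b y) y (by omega) (min_le_right b y) ih hc hc'
  have := key (u, v) hp
  simpa using this

include hY hnolow hpath in
lemma downClosed {i j i' j' : ℕ} (h : (i, j) ∈ Y) (hi1 : 1 ≤ i') (hii : i' ≤ i)
    (hj1 : 1 ≤ j') (hjj : j' ≤ j) : (i', j') ∈ Y := by
  have hgrid := grid_of_mem hY h
  have h1j : (1, j) ∈ Y := by
    have := meet_mem hY hnolow hpath hY.2.1 h
    simpa [min_eq_right hgrid.2.2.2, Nat.min_eq_left (by omega : (1:ℕ) ≤ i)] using this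
  have hij : (i', j) ∈ Y := colConvex hY h1j h hi1 hii
  obtain ⟨p, hp⟩ := hY.2.2.2.2 j' hj1 (le_trans hjj hgrid.2.2.2)
  rcases le_or_gt i' p with hip | hip
  · have := meet_mem hY hnolow hpath hp hij
    simpa [min_eq_right hip, min_eq_left hjj] using this
  · exact (hY.1.2 p j' i' j hp hij (le_of_lt hip) hjj).2

end Comb


section Gfun

variable {m n : ℕ} {Y : Set (ℕ × ℕ)}

set_option linter.unusedSectionVars false

open scoped Classical

/-- The largest column of `Y` in row `i`. -/
noncomputable def maxCol (Y : Set (ℕ × ℕ)) (n i : ℕ) : ℕ :=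
  Nat.findGreatest (fun j => (i, j) ∈ Y) n

variable (hY : StdLadder m n Y) (hnolow : ∀ p, ¬ IsLowerCorner Y p)
  (hpath : PathConnected Y)

include hY in
lemma le_maxCol {i j : ℕ} (h : (i, j) ∈ Y) : j ≤ maxCol Y n i := by
  unfold maxCol
  exact Nat.le_findGreatest (grid_of_mem hY h).2.2.2 h

include hY in
lemma maxCol_mem {i : ℕ} (h1 : 1 ≤ i) (h2 : i ≤ m) : (i, maxCol Y n i) ∈ Y := by
  obtain ⟨j, hj⟩ := hY.2.2.2.1 i h1 h2
  unfold maxCol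
  exact Nat.findGreatest_spec (P := fun j => (i, j) ∈ Y) (grid_of_mem hY hj).2.2.2 hj

include hY in
lemma maxCol_pos {i : ℕ} (h1 : 1 ≤ i) (h2 : i ≤ m) : 1 ≤ maxCol Y n i :=
  (grid_of_mem hY (maxCol_mem hY h1 h2)).2.2.1

include hY in
lemma maxCol_le_n {i : ℕ} : maxCol Y n i ≤ n := by
  unfold maxCol
  exact Nat.findGreatest_le n

include hY hnolow hpath in
lemma maxCol_anti {i i' : ℕ} (h1 : 1 ≤ i) (hii : i ≤ i') (h2 : i' ≤ m) :
    maxCol Y n i' ≤ maxCol Y n i := by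
  have hmem : (i', maxCol Y n i') ∈ Y := maxCol_mem hY (by omega) h2
  have : (i, maxCol Y n i') ∈ Y :=
    downClosed hY hnolow hpath hmem h1 hii (maxCol_pos hY (by omega) h2) le_rfl
  exact le_maxCol hY this

include hY hnolow hpath in
lemma maxCol_one : maxCol Y n 1 = n :=
  le_antisymm (maxCol_le_n hY) (le_maxCol hY hY.2.1)

include hY hnolow hpath in
lemma drop_corner {i : ℕ} (h1 : 1 ≤ i) (h2 : i + 1 ≤ m)
    (hd : maxCol Y n (i + 1) < maxCol Y n i) : IsUpperCorner Y (i, maxCol Y n (i + 1)) := by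
  set g2 := maxCol Y n (i + 1) with hg2
  have hmem2 : (i + 1, g2) ∈ Y := maxCol_mem hY (by omega) h2
  have hg2pos : 1 ≤ g2 := (grid_of_mem hY hmem2).2.2.1
  have hmem1 : (i, maxCol Y n i) ∈ Y := maxCol_mem hY h1 (by omega)
  refine ⟨?_, ?_, ?_, ?_⟩
  · exact downClosed hY hnolow hpath hmem1 h1 le_rfl hg2pos (by omega)
  · exact hmem2
  · exact downClosed hY hnolow hpath hmem1 h1 le_rfl (by omega) (by omega)
  · intro hcon
    have := le_maxCol hY hcon
    simp only at this
    omega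

section CN

variable {κ : ℕ} (cN dN : ℕ → ℕ)
  (hcN0 : cN 0 = 1) (hdN0 : dN 0 = n) (hcNlast : cN (κ + 1) = m) (hdNlast : dN (κ + 1) = 1)
  (hcNmono : ∀ a b, a < b → b ≤ κ + 1 → cN a < cN b)
  (hdNanti : ∀ a b, a < b → b ≤ κ + 1 → dN b < dN a)
  (hcornersN : ∀ p, IsUpperCorner Y p ↔ ∃ l, 1 ≤ l ∧ l ≤ κ ∧ p = (cN l, dN l))

include hcNmono in
lemma cN_mono_le : ∀ a b, a ≤ b → b ≤ κ + 1 → cN a ≤ cN b := by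
  intro a b hab hb
  rcases Nat.eq_or_lt_of_le hab with rfl | h
  · exact le_rfl
  · exact le_of_lt (hcNmono a b h hb)

include hY hnolow hpath hcornersN in
lemma noDrop {i : ℕ} (h1 : 1 ≤ i) (h2 : i + 1 ≤ m)
    (hno : ∀ l, 1 ≤ l → l ≤ κ → cN l ≠ i) : maxCol Y n (i + 1) = maxCol Y n i := by
  rcases Nat.eq_or_lt_of_le (maxCol_anti hY hnolow hpath h1 (by omega) h2) with h | h
  · exact h
  · exfalso
    obtain ⟨l, hl1, hl2, hl3⟩ := (hcornersN _).1 (drop_corner hY hnolow hpath h1 h2 h)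
    exact hno l hl1 hl2 (by exact (congrArg Prod.fst hl3).symm)

include hY hnolow hpath hcNlast hcNmono hcornersN in
lemma cornerStep {l : ℕ} (hl1 : 1 ≤ l) (hl2 : l ≤ κ) :
    maxCol Y n (cN l + 1) = dN l := by
  have hcorner : IsUpperCorner Y (cN l, dN l) := (hcornersN _).2 ⟨l, hl1, hl2, rfl⟩
  have hlm : cN l + 1 ≤ m := by
    have := hcNmono l (κ + 1) (by omega) le_rfl
    omega
  have hub : dN l ≤ maxCol Y n (cN l + 1) := le_maxCol hY hcorner.2.1
  rcases Nat.eq_or_lt_of_le hub with h | h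
  · exact h.symm
  · exfalso
    have hmem : (cN l + 1, maxCol Y n (cN l + 1)) ∈ Y := maxCol_mem hY (by omega) hlm
    have : (cN l + 1, dN l + 1) ∈ Y :=
      downClosed hY hnolow hpath hmem (by omega) le_rfl (by omega) (by omega)
    exact hcorner.2.2.2 this

include hY hnolow hpath hcN0 hdN0 hcNlast hcNmono hcornersN in
lemma gEq : ∀ l, l ≤ κ → ∀ i, cN l < i → i ≤ cN (l + 1) → maxCol Y n i = dN l := by
  intro l hl
  have hstep : ∀ i, cN l + 1 ≤ i → i ≤ cN (l + 1) → maxCol Y n i = dN l := by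
    intro i hi
    induction i, hi using Nat.le_induction with
    | base =>
      intro hle
      rcases Nat.eq_zero_or_pos l with rfl | hl1
      · have h2m : 1 + 1 ≤ m := by
          have h1 := cN_mono_le cN hcNmono 1 (κ + 1) (by omega) le_rfl
          rw [hcNlast] at h1
          rw [hcN0] at hle
          norm_num at hle
          omega
        have hnd := noDrop hY hnolow hpath cN dN hcornersN le_rfl h2m
          (fun l' h1' h2' => by
            have := hcNmono 0 l' (by omega) (by omega)
            rw [hcN0] at this
            omega)
        rw [hcN0, hdN0, hnd, maxCol_one hY hnolow hpath]
      · exact cornerStep hY hnolow hpath cN dN hcNlast hcNmono hcornersN hl1 hl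
    | succ i hi ih =>
      intro hle
      have him : i + 1 ≤ m := by
        have := cN_mono_le cN hcNmono (l + 1) (κ + 1) (by omega) le_rfl
        omega
      have hnod : maxCol Y n (i + 1) = maxCol Y n i := by
        apply noDrop hY hnolow hpath cN dN hcornersN (by
          have := hcN0 ▸ cN_mono_le cN hcNmono 0 l (by omega) (by omega)
          omega) him
        intro l' h1' h2' hEq
        rcases le_or_gt l' l with hll | hll
        · have := cN_mono_le cN hcNmono l' l hll (by omega)
          omega
        · have := cN_mono_le cN hcNmono (l + 1) l' hll (by omega)
          omega
      rw [hnod, ih (by omega)]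
  intro i hi1 hi2
  exact hstep i (by omega) hi2

include hY hnolow hpath hcN0 hdN0 hcNlast hcNmono hdNanti hcornersN in
lemma g_le_dN : ∀ (k l : ℕ), l ≤ κ → κ - l ≤ k → ∀ i, cN l < i → i ≤ m →
    maxCol Y n i ≤ dN l := by
  intro k
  induction k with
  | zero =>
    intro l hl hfuel i hi him
    obtain rfl : l = κ := by omega
    have := gEq hY hnolow hpath cN dN hcN0 hdN0 hcNlast hcNmono hcornersN l le_rfl i hi
      (by rw [hcNlast]; exact him)
    omega
  | succ k ih =>
    intro l hl hfuel i hi him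
    rcases le_or_gt i (cN (l + 1)) with hle | hgt
    · have := gEq hY hnolow hpath cN dN hcN0 hdN0 hcNlast hcNmono hcornersN l hl i hi hle
      omega
    · have hlκ : l + 1 ≤ κ := by
        by_contra hcon
        have : l + 1 = κ + 1 := by omega
        rw [this, hcNlast] at hgt
        omega
      have h1 := ih (l + 1) hlκ (by omega) i hgt him
      have h2 := hdNanti l (l + 1) (by omega) (by omega)
      omega

include hY hnolow hpath hcN0 hdN0 hcNlast hcNmono hdNanti hcornersN in
lemma shapeS2 {i j : ℕ} (h : (i, j) ∈ Y) {l : ℕ} (hl1 : 1 ≤ l) (hl2 : l ≤ κ) :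
    i ≤ cN l ∨ j ≤ dN l := by
  rcases le_or_gt i (cN l) with hle | hgt
  · exact Or.inl hle
  · right
    have hgrid := grid_of_mem hY h
    have h1 := le_maxCol hY h
    have h2 := g_le_dN hY hnolow hpath cN dN hcN0 hdN0 hcNlast hcNmono hdNanti hcornersN
      (κ - l) l hl2 le_rfl i hgt hgrid.2.1
    omega

include hcNlast hcNmono in
lemma exists_interval : ∀ (k l : ℕ), l ≤ κ → ∀ i, cN l < i → i ≤ m → κ - l ≤ k →
    ∃ l', l' ≤ κ ∧ l ≤ l' ∧ cN l' < i ∧ i ≤ cN (l' + 1) := by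
  intro k
  induction k with
  | zero =>
    intro l hl i hi him hfuel
    obtain rfl : l = κ := by omega
    exact ⟨l, le_rfl, le_rfl, hi, by rw [hcNlast]; exact him⟩
  | succ k ih =>
    intro l hl i hi him hfuel
    rcases le_or_gt i (cN (l + 1)) with hle | hgt
    · exact ⟨l, hl, le_rfl, hi, hle⟩
    · have hlκ : l + 1 ≤ κ := by
        by_contra hcon
        have : l + 1 = κ + 1 := by omega
        rw [this, hcNlast] at hgt
        omega
      obtain ⟨l', h1, h2, h3, h4⟩ := ih (l + 1) hlκ i hgt him (by omega)
      exact ⟨l', h1, by omega, h3, h4⟩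

include hY hnolow hpath hcN0 hdN0 hcNlast hcNmono hcornersN in
lemma shapeS4 {i j : ℕ} (hg : InGrid m n (i, j))
    (hcond : ∀ l, 1 ≤ l → l ≤ κ → i ≤ cN l ∨ j ≤ dN l) : (i, j) ∈ Y := by
  obtain ⟨hi1, him, hj1, hjn⟩ := hg
  rcases Nat.eq_or_lt_of_le hi1 with h1 | h1
  · exact downClosed hY hnolow hpath hY.2.1 (by omega) (by omega) hj1 hjn
  · obtain ⟨l', hl'κ, -, hl'1, hl'2⟩ :=
      exists_interval (κ := κ) cN hcNlast hcNmono κ 0 (by omega) i (by rw [hcN0]; omega) him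
        (by omega)
    have hgl : maxCol Y n i = dN l' :=
      gEq hY hnolow hpath cN dN hcN0 hdN0 hcNlast hcNmono hcornersN l' hl'κ i hl'1 hl'2
    have hjd : j ≤ dN l' := by
      rcases Nat.eq_zero_or_pos l' with rfl | hpos
      · rw [hdN0]; exact hjn
      · rcases hcond l' hpos hl'κ with h | h
        · omega
        · exact h
    have hmem := maxCol_mem hY (by omega : 1 ≤ i) him
    exact downClosed hY hnolow hpath hmem (by omega) le_rfl hj1 (by omega)

end CN

end Gfun

section MinorHelp

lemma strictMono_fin_le {t : ℕ} {f : Fin t → ℕ} (hf : StrictMono f) (z u : Fin t)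
    (hz : (z : ℕ) = 0) : (u : ℕ) + f z ≤ f u := by
  have key : ∀ (k : ℕ) (hk : k < t), k + f z ≤ f ⟨k, hk⟩ := by
    intro k
    induction k with
    | zero =>
      intro hk
      have : z = ⟨0, hk⟩ := Fin.ext hz
      simp [this]
    | succ k ih =>
      intro hk
      have h1 := ih (by omega)
      have h2 : f ⟨k, by omega⟩ < f ⟨k + 1, hk⟩ := hf (by simp [Fin.mk_lt_mk])
      omega
  exact key u.1 u.2

lemma strictMono_ge_of_one_le {t : ℕ} {f : Fin t → ℕ} (hf : StrictMono f)
    (h1 : ∀ u : Fin t, 1 ≤ f u) (u : Fin t) : (u : ℕ) + 1 ≤ f u := by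
  have key : ∀ (k : ℕ) (hk : k < t), k + 1 ≤ f ⟨k, hk⟩ := by
    intro k
    induction k with
    | zero =>
      intro hk
      exact h1 ⟨0, hk⟩
    | succ k ih =>
      intro hk
      have hk' : k < t := by omega
      have hih := ih hk'
      have h2 : f ⟨k, hk'⟩ < f ⟨k + 1, hk⟩ := hf (by simp [Fin.mk_lt_mk])
      omega
  exact key u.1 u.2

lemma isMinor_rect {t : ℕ} (ht : 2 ≤ t) (S : Set (ℕ × ℕ)) (a b : ℕ) (hta : t ≤ a) (htb : t ≤ b)
    (hS : ∀ x y, a - t + 1 ≤ x → x ≤ a → b - t + 1 ≤ y → y ≤ b → (x, y) ∈ S) :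
    IsMinor t S {p | a - t + 1 ≤ p.1 ∧ p.1 ≤ a ∧ b - t + 1 ≤ p.2 ∧ p.2 ≤ b} := by
  refine ⟨fun u => a - t + 1 + u, fun v => b - t + 1 + v, ?_, ?_, ?_, ?_⟩
  · exact fun u v huv => Nat.add_lt_add_left (Fin.lt_def.mp huv) _
  · exact fun u v huv => Nat.add_lt_add_left (Fin.lt_def.mp huv) _
  · intro u v
    have hu := u.isLt
    have hv := v.isLt
    exact hS (a - t + 1 + ↑u) (b - t + 1 + ↑v) (by omega) (by omega) (by omega) (by omega)
  · ext p
    simp only [Set.mem_setOf_eq]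
    constructor
    · rintro ⟨h1, h2, h3, h4⟩
      refine ⟨⟨p.1 - (a - t + 1), by omega⟩, ⟨p.2 - (b - t + 1), by omega⟩, ?_⟩
      rw [Prod.ext_iff]
      dsimp only
      omega
    · rintro ⟨u, v, rfl⟩
      have hu := u.isLt
      have hv := v.isLt
      dsimp only
      omega

end MinorHelp

section PathHelp

lemma adjStep_symm {p q : ℕ × ℕ} (h : AdjStep p q) : AdjStep q p := by
  unfold AdjStep at *
  tauto

lemma path_to_one_one {S : Set (ℕ × ℕ)}
    (hgrid : ∀ p ∈ S, 1 ≤ p.1 ∧ 1 ≤ p.2)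
    (hdc : ∀ i j i' j', (i, j) ∈ S → 1 ≤ i' → i' ≤ i → 1 ≤ j' → j' ≤ j → (i', j') ∈ S) :
    ∀ p ∈ S, Relation.ReflTransGen (fun a b => a ∈ S ∧ b ∈ S ∧ AdjStep a b) p (1, 1) := by
  have key : ∀ (k : ℕ) (p : ℕ × ℕ), p ∈ S → p.1 + p.2 ≤ k →
      Relation.ReflTransGen (fun a b => a ∈ S ∧ b ∈ S ∧ AdjStep a b) p (1, 1) := by
    intro k
    induction k with
    | zero =>
      intro p hp hk
      have := hgrid p hp
      omega
    | succ k ih =>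
      intro p hp hk
      obtain ⟨i, j⟩ := p
      have hg := hgrid (i, j) hp
      rcases le_or_gt 2 j with hj | hj
      · have hq : (i, j - 1) ∈ S := hdc i j i (j - 1) hp (by omega) le_rfl (by omega) (by omega)
        refine Relation.ReflTransGen.head ⟨hp, hq, ?_⟩ (ih (i, j - 1) hq (by simp; omega))
        exact Or.inl ⟨rfl, Or.inr (by simp; omega)⟩
      · rcases le_or_gt 2 i with hi | hi
        · have hq : (i - 1, j) ∈ S := hdc i j (i - 1) j hp (by omega) (by omega) (by omega) le_rfl
          refine Relation.ReflTransGen.head ⟨hp, hq, ?_⟩ (ih (i - 1, j) hq (by simp; omega))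
          exact Or.inr ⟨rfl, Or.inr (by simp; omega)⟩
        · have : i = 1 ∧ j = 1 := ⟨by omega, by omega⟩
          rw [this.1, this.2]
  exact fun p hp => key (p.1 + p.2) p hp le_rfl

lemma pathConnected_of_downClosed {S : Set (ℕ × ℕ)}
    (hgrid : ∀ p ∈ S, 1 ≤ p.1 ∧ 1 ≤ p.2)
    (hdc : ∀ i j i' j', (i, j) ∈ S → 1 ≤ i' → i' ≤ i → 1 ≤ j' → j' ≤ j → (i', j') ∈ S) :
    PathConnected S := by
  intro p hp q hq
  refine ⟨hp, hq, ?_⟩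
  have hsymm : Symmetric (fun a b : ℕ × ℕ => a ∈ S ∧ b ∈ S ∧ AdjStep a b) :=
    fun a b ⟨ha, hb, hadj⟩ => ⟨hb, ha, adjStep_symm hadj⟩
  exact (path_to_one_one hgrid hdc p hp).trans
    ((@Relation.ReflTransGen.symmetric _ _ ⟨fun a b h => hsymm h⟩).symm _ _ (path_to_one_one hgrid hdc q hq))

end PathHelp


section Split

open MvPolynomial

variable (K : Type) [Field K]

lemma ladder_split (t : ℕ) (Y Y' Z : Set (ℕ × ℕ)) (hsub : Y' ⊆ Y) (hZ : Z = Y \ Y')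
    (hmin : ∀ (r c : Fin t → ℕ), StrictMono r → StrictMono c →
      (∀ u v, (r u, c v) ∈ Y) → ∀ u v, (r u, c v) ∈ Y') :
    Nonempty (LadderRing K t Y ≃ₐ[K] MvPolynomial Z (LadderRing K t Y')) := by
  classical
  have hunion : Z ∪ Y' = Y := by
    rw [hZ]
    exact Set.diff_union_of_subset hsub
  have hdisj : Disjoint Z Y' := by
    rw [hZ]
    exact Set.disjoint_sdiff_left
  let e : ↥Y ≃ ↥Z ⊕ ↥Y' := (Equiv.setCongr hunion.symm).trans (Equiv.Set.union hdisj)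
  let Φ : MvPolynomial Y K ≃ₐ[K] MvPolynomial Z (MvPolynomial Y' K) :=
    (renameEquiv K e).trans (sumAlgEquiv K Z Y')
  have hX : ∀ (p : ℕ × ℕ) (hp : p ∈ Y'),
      Φ (X ⟨p, hsub hp⟩) = C (X ⟨p, hp⟩) := by
    intro p hp
    have he : e ⟨p, hsub hp⟩ = Sum.inr ⟨p, hp⟩ := by
      simp only [e, Equiv.trans_apply, Equiv.setCongr_apply]
      exact Equiv.Set.union_apply_right hdisj hp
    simp only [Φ, AlgEquiv.trans_apply, renameEquiv_apply, rename_X, he]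
    simp only [sumAlgEquiv_X_inr]
  have hPoly : ∀ (r c : Fin t → ℕ) (h' : ∀ u v, (r u, c v) ∈ Y'),
      Φ (minorPoly K r c (fun u v => hsub (h' u v))) = C (minorPoly K r c h') := by
    intro r c h'
    unfold minorPoly
    rw [show (Φ : MvPolynomial Y K → MvPolynomial Z (MvPolynomial Y' K)) = ⇑(Φ : MvPolynomial Y K →+* MvPolynomial Z (MvPolynomial Y' K)) from rfl]
    rw [RingHom.map_det, RingHom.map_det]
    congr 1
    rw [RingHom.mapMatrix_apply, RingHom.mapMatrix_apply]
    refine Matrix.ext fun u v => ?_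
    simp only [Matrix.map_apply, Matrix.of_apply]
    exact hX _ _
  have hIdeal : (minorIdeal K t Y).map (Φ : MvPolynomial Y K →+* MvPolynomial Z (MvPolynomial Y' K))
      = (minorIdeal K t Y').map (C : MvPolynomial Y' K →+* MvPolynomial Z (MvPolynomial Y' K)) := by
    unfold minorIdeal
    rw [Ideal.map_span, Ideal.map_span]
    congr 1
    ext f
    constructor
    · rintro ⟨g, ⟨r, c, hr, hc, h, rfl⟩, rfl⟩
      refine ⟨minorPoly K r c (fun u v => hmin r c hr hc h u v), ⟨r, c, hr, hc, _, rfl⟩, ?_⟩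
      exact (hPoly r c _).symm ▸ rfl
    · rintro ⟨g, ⟨r, c, hr, hc, h', rfl⟩, rfl⟩
      exact ⟨minorPoly K r c (fun u v => hsub (h' u v)), ⟨r, c, hr, hc, _, rfl⟩, hPoly r c h'⟩
  let E1 : LadderRing K t Y ≃ₐ[K]
      (MvPolynomial Z (MvPolynomial Y' K) ⧸
        (minorIdeal K t Y').map (C : MvPolynomial Y' K →+* MvPolynomial Z (MvPolynomial Y' K))) :=
    Ideal.quotientEquivAlg (minorIdeal K t Y) _ Φ hIdeal.symm
  let E2 : MvPolynomial Z (LadderRing K t Y') ≃ₐ[MvPolynomial Y' K]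
      (MvPolynomial Z (MvPolynomial Y' K) ⧸
        (minorIdeal K t Y').map (C : MvPolynomial Y' K →+* MvPolynomial Z (MvPolynomial Y' K))) :=
    MvPolynomial.quotientEquivQuotientMvPolynomial (minorIdeal K t Y')
  exact ⟨E1.trans ((E2.restrictScalars K).symm)⟩

end Split


/-- Let `t ≥ 2` and let `Y` be a one-sided ladder with no lower inside
corners and upper inside corners `(c_1,d_1), …, (c_κ,d_κ)` (with the conventions
`(c_0,d_0) = (1,n)` and `(c_{κ+1},d_{κ+1}) = (m,1)`), containing at least one `t × t`
minor. Let `j₁ = max {j : c_j < t}` and `j₂ = min {j : d_j < t}`. Then `j₁ < j₂`; the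
set `Y' = {(i,j) ∈ Y : i ≤ c_{j₂}, j ≤ d_{j₁}}` is a one-sided `t`-connected ladder;
`Z = Y \ Y'` contains no `t × t` minor; and `R_t(Y)` is isomorphic as a `K`-algebra to
the polynomial ring over `R_t(Y')` in the variables indexed by `Z`. -/
theorem oneSided_splitting (m n κ t : ℕ) (ht : 2 ≤ t) (K : Type) [Field K]
    (Y : Set (ℕ × ℕ)) (hY : StdLadder m n Y)
    (hpath : PathConnected Y) (hnolow : ∀ p, ¬ IsLowerCorner Y p)
    (c d : Fin (κ + 2) → ℕ)
    (hc0 : c 0 = 1) (hd0 : d 0 = n)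
    (hclast : c (Fin.last (κ + 1)) = m) (hdlast : d (Fin.last (κ + 1)) = 1)
    (hcmono : StrictMono c) (hdanti : StrictAnti d)
    (hcorners : ∀ p : ℕ × ℕ, IsUpperCorner Y p ↔
      ∃ j : Fin (κ + 2), 0 < (j : ℕ) ∧ (j : ℕ) < κ + 1 ∧ p = (c j, d j))
    (hminor : ∃ M, IsMinor t Y M)
    (j₁ j₂ : Fin (κ + 2))
    (hj₁ : c j₁ < t ∧ ∀ j, c j < t → j ≤ j₁)
    (hj₂ : d j₂ < t ∧ ∀ j, d j < t → j₂ ≤ j)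
    (Y' Z : Set (ℕ × ℕ))
    (hY' : Y' = {p ∈ Y | p.1 ≤ c j₂ ∧ p.2 ≤ d j₁})
    (hZ : Z = Y \ Y') :
    j₁ < j₂ ∧
    IsLadder m n Y' ∧ OneSided Y' ∧ TConnected m n t Y' ∧
    (¬ ∃ M, IsMinor t Z M) ∧
    Nonempty (LadderRing K t Y ≃ₐ[K] MvPolynomial Z (LadderRing K t Y')) := by
  classical
  -- scalarized corner functions, made opaque via an existential package
  have hpack : ∃ cN dN : ℕ → ℕ, cN 0 = 1 ∧ dN 0 = n ∧ cN (κ + 1) = m ∧ dN (κ + 1) = 1 ∧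
      (∀ a b, a < b → b ≤ κ + 1 → cN a < cN b) ∧
      (∀ a b, a < b → b ≤ κ + 1 → dN b < dN a) ∧
      (∀ p, IsUpperCorner Y p ↔ ∃ l, 1 ≤ l ∧ l ≤ κ ∧ p = (cN l, dN l)) ∧
      (∀ j : Fin (κ + 2), cN (j : ℕ) = c j ∧ dN (j : ℕ) = d j) := by
    refine ⟨fun l => c ⟨min l (κ + 1), by omega⟩, fun l => d ⟨min l (κ + 1), by omega⟩,
      ?_, ?_, ?_, ?_, ?_, ?_, ?_, ?_⟩
    · simp only
      rw [show (⟨min 0 (κ + 1), by omega⟩ : Fin (κ + 2)) = 0 from Fin.ext (by simp), hc0]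
    · simp only
      rw [show (⟨min 0 (κ + 1), by omega⟩ : Fin (κ + 2)) = 0 from Fin.ext (by simp), hd0]
    · simp only
      rw [show (⟨min (κ + 1) (κ + 1), by omega⟩ : Fin (κ + 2)) = Fin.last (κ + 1) from
        Fin.ext (by simp [Fin.last]), hclast]
    · simp only
      rw [show (⟨min (κ + 1) (κ + 1), by omega⟩ : Fin (κ + 2)) = Fin.last (κ + 1) from
        Fin.ext (by simp [Fin.last]), hdlast]
    · intro a b hab hb
      exact hcmono (by rw [Fin.mk_lt_mk]; omega)
    · intro a b hab hb
      exact hdanti (by rw [Fin.mk_lt_mk]; omega)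
    · intro p
      constructor
      · intro h
        obtain ⟨j, hj0, hjκ, hp⟩ := (hcorners p).1 h
        refine ⟨(j : ℕ), by omega, by omega, ?_⟩
        simp only
        rw [show (⟨min (j : ℕ) (κ + 1), by omega⟩ : Fin (κ + 2)) = j from
          Fin.ext (by simp; have := j.isLt; omega)]
        exact hp
      · rintro ⟨l, h1, h2, hp⟩
        apply (hcorners _).2
        refine ⟨⟨l, by omega⟩, by show 0 < l; omega, by simp; omega, ?_⟩
        rw [hp]
        simp only
        rw [show (⟨min l (κ + 1), by omega⟩ : Fin (κ + 2)) = ⟨l, by omega⟩ from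
          Fin.ext (by simp; omega)]
    · intro j
      constructor <;> simp only <;>
        rw [show (⟨min (j : ℕ) (κ + 1), by omega⟩ : Fin (κ + 2)) = j from
          Fin.ext (by simp; have := j.isLt; omega)]
  obtain ⟨cN, dN, hcN0, hdN0, hcNlast, hdNlast, hcNmono, hdNanti, hcornersN, hNeq⟩ := hpack
  have hcNeq : ∀ j : Fin (κ + 2), cN (j : ℕ) = c j := fun j => (hNeq j).1
  have hdNeq : ∀ j : Fin (κ + 2), dN (j : ℕ) = d j := fun j => (hNeq j).2
  have hmk : ∀ (l : ℕ) (hl : l < κ + 2), cN l = c ⟨l, hl⟩ ∧ dN l = d ⟨l, hl⟩ := fun l hl =>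
    ⟨(hNeq ⟨l, hl⟩).1, (hNeq ⟨l, hl⟩).2⟩
  have hcNle : ∀ a b, a ≤ b → b ≤ κ + 1 → cN a ≤ cN b := by
    intro a b hab hb
    rcases Nat.eq_or_lt_of_le hab with rfl | h
    · exact le_rfl
    · exact le_of_lt (hcNmono a b h hb)
  have hdNle : ∀ a b, a ≤ b → b ≤ κ + 1 → dN b ≤ dN a := by
    intro a b hab hb
    rcases Nat.eq_or_lt_of_le hab with rfl | h
    · exact le_rfl
    · exact le_of_lt (hdNanti a b h hb)
  -- packaged shape lemmas
  have DC := fun {i j i' j' : ℕ} (h : (i, j) ∈ Y) => downClosed hY hnolow hpath (i := i) (j := j) (i' := i') (j' := j') h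
  have S2 := fun {i j : ℕ} (h : (i, j) ∈ Y) {l : ℕ} (h1 : 1 ≤ l) (h2 : l ≤ κ) =>
    shapeS2 hY hnolow hpath cN dN hcN0 hdN0 hcNlast hcNmono hdNanti hcornersN h h1 h2
  have S4 := fun {i j : ℕ} (hg : InGrid m n (i, j))
      (hc : ∀ l, 1 ≤ l → l ≤ κ → i ≤ cN l ∨ j ≤ dN l) =>
    shapeS4 hY hnolow hpath cN dN hcN0 hdN0 hcNlast hcNmono hcornersN hg hc
  have ht0 : 0 < t := by omega
  have htlt : t - 1 < t := by omega
  -- data from the existing minor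
  obtain ⟨M₀, r₀, c₀, hr₀, hc₀, hmem₀, -⟩ := hminor
  have hge₀r : ∀ u : Fin t, (u : ℕ) + 1 ≤ r₀ u :=
    strictMono_ge_of_one_le hr₀ (fun u => (grid_of_mem hY (hmem₀ u u)).1)
  have hge₀c : ∀ v : Fin t, (v : ℕ) + 1 ≤ c₀ v :=
    strictMono_ge_of_one_le hc₀ (fun v => (grid_of_mem hY (hmem₀ v v)).2.2.1)
  have huLval : ((⟨t - 1, htlt⟩ : Fin t) : ℕ) = t - 1 := rfl
  have hrL : t ≤ r₀ ⟨t - 1, htlt⟩ := by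
    have := hge₀r ⟨t - 1, htlt⟩
    omega
  have hcL : t ≤ c₀ ⟨t - 1, htlt⟩ := by
    have := hge₀c ⟨t - 1, htlt⟩
    omega
  have hgrid₀ := grid_of_mem hY (hmem₀ ⟨t - 1, htlt⟩ ⟨t - 1, htlt⟩)
  have htm : t ≤ m := le_trans hrL hgrid₀.2.1
  have htn : t ≤ n := le_trans hcL hgrid₀.2.2.2
  -- position of j₁ and j₂
  have hj₁κ : (j₁ : ℕ) ≤ κ := by
    by_contra hcon
    have hj : j₁ = Fin.last (κ + 1) := Fin.ext (by simp [Fin.last]; have := j₁.isLt; omega)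
    rw [hj, hclast] at hj₁
    omega
  have hj₂pos : 1 ≤ (j₂ : ℕ) := by
    by_contra hcon
    have hj : j₂ = 0 := Fin.ext (by rw [Fin.val_zero]; omega)
    rw [hj, hd0] at hj₂
    omega
  have hj12 : j₁ < j₂ := by
    rw [Fin.lt_def]
    by_contra hcon
    have hj₁pos : 1 ≤ (j₁ : ℕ) := by omega
    have hdle : d j₁ ≤ d j₂ := hdanti.antitone (by rw [Fin.le_def]; omega)
    rcases S2 (hmem₀ ⟨t - 1, htlt⟩ ⟨t - 1, htlt⟩) (l := (j₁ : ℕ)) hj₁pos hj₁κ with h | h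
    · rw [hcNeq j₁] at h
      omega
    · rw [hdNeq j₁] at h
      omega
  have hcj₂t : t ≤ c j₂ := by
    by_contra hcon
    have := hj₁.2 j₂ (by omega)
    rw [Fin.le_def] at this
    rw [Fin.lt_def] at hj12
    omega
  have hdj₁t : t ≤ d j₁ := by
    by_contra hcon
    have := hj₂.2 j₁ (by omega)
    rw [Fin.le_def] at this
    rw [Fin.lt_def] at hj12
    omega
  have hcj₂m : c j₂ ≤ m := by
    rw [← hclast]
    exact hcmono.monotone (Fin.le_last j₂)
  have hdj₁n : d j₁ ≤ n := by
    rw [← hd0]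
    exact hdanti.antitone (Fin.zero_le j₁)
  -- membership description of Y'
  have hY'mem : ∀ x y : ℕ, ((x, y) ∈ Y') ↔ ((x, y) ∈ Y ∧ x ≤ c j₂ ∧ y ≤ d j₁) := by
    intro x y
    rw [hY']
    exact Iff.rfl
  have hY'sub : Y' ⊆ Y := by
    intro p hp
    obtain ⟨x, y⟩ := p
    exact ((hY'mem x y).1 hp).1
  -- all t-minors of Y live in Y'
  have hminY' : ∀ (r cc : Fin t → ℕ), StrictMono r → StrictMono cc →
      (∀ u v, (r u, cc v) ∈ Y) → ∀ u v, (r u, cc v) ∈ Y' := by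
    intro r cc hr hcc hmem u v
    have hger : ∀ w : Fin t, (w : ℕ) + 1 ≤ r w :=
      strictMono_ge_of_one_le hr (fun w => (grid_of_mem hY (hmem w w)).1)
    have hgec : ∀ w : Fin t, (w : ℕ) + 1 ≤ cc w :=
      strictMono_ge_of_one_le hcc (fun w => (grid_of_mem hY (hmem w w)).2.2.1)
    have hrLt : t ≤ r ⟨t - 1, htlt⟩ := by have := hger ⟨t - 1, htlt⟩; omega
    have hcLt : t ≤ cc ⟨t - 1, htlt⟩ := by have := hgec ⟨t - 1, htlt⟩; omega
    have hrle : r u ≤ r ⟨t - 1, htlt⟩ := hr.monotone (by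
      rw [Fin.le_def]
      have := u.isLt
      omega)
    have hccle : cc v ≤ cc ⟨t - 1, htlt⟩ := hcc.monotone (by
      rw [Fin.le_def]
      have := v.isLt
      omega)
    have hgridL := grid_of_mem hY (hmem ⟨t - 1, htlt⟩ ⟨t - 1, htlt⟩)
    have claim1 : r ⟨t - 1, htlt⟩ ≤ c j₂ := by
      by_cases hj2top : (j₂ : ℕ) = κ + 1
      · have hj : j₂ = Fin.last (κ + 1) := Fin.ext (by simp [Fin.last]; omega)
        rw [hj, hclast]
        exact hgridL.2.1
      · have hj2κ : (j₂ : ℕ) ≤ κ := by have := j₂.isLt; omega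
        rcases S2 (hmem ⟨t - 1, htlt⟩ ⟨t - 1, htlt⟩) (l := (j₂ : ℕ)) hj₂pos hj2κ with h | h
        · rw [hcNeq j₂] at h
          exact h
        · rw [hdNeq j₂] at h
          omega
    have claim2 : cc ⟨t - 1, htlt⟩ ≤ d j₁ := by
      by_cases hj1bot : (j₁ : ℕ) = 0
      · have hj : j₁ = 0 := Fin.ext (by rw [Fin.val_zero]; omega)
        rw [hj, hd0]
        exact hgridL.2.2.2
      · rcases S2 (hmem ⟨t - 1, htlt⟩ ⟨t - 1, htlt⟩) (l := (j₁ : ℕ)) (by omega) hj₁κ with h | h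
        · rw [hcNeq j₁] at h
          omega
        · rw [hdNeq j₁] at h
          exact h
    rw [hY'mem]
    exact ⟨hmem u v, le_trans hrle claim1, le_trans hccle claim2⟩
  -- down-closedness and basic structure of Y'
  have hY'dc : ∀ i j i' j', (i, j) ∈ Y' → 1 ≤ i' → i' ≤ i → 1 ≤ j' → j' ≤ j → (i', j') ∈ Y' := by
    intro i j i' j' h h1 h2 h3 h4
    obtain ⟨hYm, hb1, hb2⟩ := (hY'mem i j).1 h
    exact (hY'mem i' j').2 ⟨DC hYm h1 h2 h3 h4, by omega, by omega⟩
  have hY'ladder : IsLadder m n Y' := by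
    constructor
    · exact fun p hp => hY.1.1 p (hY'sub hp)
    · intro i j p q h1 h2 hip hjq
      obtain ⟨ha1, ha2, ha3⟩ := (hY'mem i j).1 h1
      obtain ⟨hb1, hb2, hb3⟩ := (hY'mem p q).1 h2
      have hop := hY.1.2 i j p q ha1 hb1 hip hjq
      exact ⟨(hY'mem i q).2 ⟨hop.1, by omega, by omega⟩,
             (hY'mem p j).2 ⟨hop.2, by omega, by omega⟩⟩
  have hY'grid : ∀ p ∈ Y', 1 ≤ p.1 ∧ 1 ≤ p.2 := by
    intro p hp
    have := hY.1.1 p (hY'sub hp)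
    exact ⟨this.1, this.2.2.1⟩
  have hY'dc' : ∀ i j i' j', (i, j) ∈ Y' → 1 ≤ i' → i' ≤ i → 1 ≤ j' → j' ≤ j → (i', j') ∈ Y' :=
    hY'dc
  have hY'path : PathConnected Y' := pathConnected_of_downClosed hY'grid hY'dc
  have hY'nolow : ∀ p, ¬ IsLowerCorner Y' p := by
    rintro ⟨x, y⟩ ⟨h1, h2, h3, h4⟩
    simp only at h2 h3 h4
    have hg1 := hY'grid _ h1
    simp only at hg1
    by_cases hx : x = 1
    · subst hx
      have := hY'grid _ h2
      simp at this
    · by_cases hy : y = 1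
      · subst hy
        have := hY'grid _ h3
        simp at this
      · exact h4 (hY'dc x y (x - 1) (y - 1) h1 (by omega) (by omega) (by omega) (by omega))
  -- `t`-connectedness of Y'
  have hTConn : TConnected m n t Y' := by
    rintro ⟨Z₁, Z₂, ⟨z1, hz1⟩, ⟨z2, hz2⟩, -, -, hd, hu, hmQ⟩
    have hAdjIff : ∀ p q : ℕ × ℕ, p ∈ Y' → q ∈ Y' → AdjStep p q → (p ∈ Z₁ ↔ q ∈ Z₁) := by
      rintro ⟨p1, p2⟩ ⟨q1, q2⟩ hp hq hadj
      obtain ⟨hpY, hpc, hpd⟩ := (hY'mem p1 p2).1 hp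
      obtain ⟨hqY, hqc, hqd⟩ := (hY'mem q1 q2).1 hq
      have gp := grid_of_mem hY hpY
      have gq := grid_of_mem hY hqY
      have hco : p1 = q1 ∨ p2 = q2 := by
        rcases hadj with ⟨h1, -⟩ | ⟨h1, -⟩
        · exact Or.inl h1
        · exact Or.inr h1
      have hbd : p1 ≤ q1 + 1 ∧ q1 ≤ p1 + 1 ∧ p2 ≤ q2 + 1 ∧ q2 ≤ p2 + 1 := by
        rcases hadj with ⟨h1, h2 | h2⟩ | ⟨h1, h2 | h2⟩ <;>
          simp only at h1 h2 <;> exact ⟨by omega, by omega, by omega, by omega⟩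
      have hp11 : 1 ≤ p1 := gp.1
      have hp1m : p1 ≤ m := gp.2.1
      have hp21 : 1 ≤ p2 := gp.2.2.1
      have hp2n : p2 ≤ n := gp.2.2.2
      have hq11 : 1 ≤ q1 := gq.1
      have hq1m : q1 ≤ m := gq.2.1
      have hq21 : 1 ≤ q2 := gq.2.2.1
      have hq2n : q2 ≤ n := gq.2.2.2
      obtain ⟨A, hAp, hAq, hAt, hAeq⟩ :
          ∃ A, p1 ≤ A ∧ q1 ≤ A ∧ t ≤ A ∧ (A = p1 ∨ A = q1 ∨ A = t) := by
        rcases le_total p1 q1 with h | h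
        · rcases le_total q1 t with h' | h'
          · exact ⟨t, by omega, by omega, le_rfl, Or.inr (Or.inr rfl)⟩
          · exact ⟨q1, by omega, le_rfl, by omega, Or.inr (Or.inl rfl)⟩
        · rcases le_total p1 t with h' | h'
          · exact ⟨t, by omega, by omega, le_rfl, Or.inr (Or.inr rfl)⟩
          · exact ⟨p1, le_rfl, by omega, by omega, Or.inl rfl⟩
      obtain ⟨B, hBp, hBq, hBt, hBeq⟩ :
          ∃ B, p2 ≤ B ∧ q2 ≤ B ∧ t ≤ B ∧ (B = p2 ∨ B = q2 ∨ B = t) := by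
        rcases le_total p2 q2 with h | h
        · rcases le_total q2 t with h' | h'
          · exact ⟨t, by omega, by omega, le_rfl, Or.inr (Or.inr rfl)⟩
          · exact ⟨q2, by omega, le_rfl, by omega, Or.inr (Or.inl rfl)⟩
        · rcases le_total p2 t with h' | h'
          · exact ⟨t, by omega, by omega, le_rfl, Or.inr (Or.inr rfl)⟩
          · exact ⟨p2, le_rfl, by omega, by omega, Or.inl rfl⟩
      have hAle : ∀ x, p1 ≤ x → q1 ≤ x → t ≤ x → A ≤ x := by
        rcases hAeq with rfl | rfl | rfl <;> intro x h1 h2 h3 <;> assumption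
      have hBle : ∀ x, p2 ≤ x → q2 ≤ x → t ≤ x → B ≤ x := by
        rcases hBeq with rfl | rfl | rfl <;> intro x h1 h2 h3 <;> assumption
      have hAm : A ≤ m := hAle m hp1m hq1m htm
      have hBn : B ≤ n := hBle n hp2n hq2n htn
      have hAc : A ≤ c j₂ := hAle _ hpc hqc hcj₂t
      have hBd : B ≤ d j₁ := hBle _ hpd hqd hdj₁t
      have hArect : A ≤ p1 + t - 1 ∧ A ≤ q1 + t - 1 := by
        rcases hAeq with rfl | rfl | rfl <;>
          exact ⟨by omega, by omega⟩
      have hBrect : B ≤ p2 + t - 1 ∧ B ≤ q2 + t - 1 := by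
        rcases hBeq with rfl | rfl | rfl <;>
          exact ⟨by omega, by omega⟩
      have habY' : (A, B) ∈ Y' := by
        refine (hY'mem _ _).2 ⟨S4 ⟨by omega, by omega, by omega, by omega⟩ ?_, hAc, hBd⟩
        intro l hl1 hlκ
        rcases le_or_gt l (j₁ : ℕ) with hlj | hlj
        · right
          have h1 : dN l ≥ dN (j₁ : ℕ) := hdNle l (j₁ : ℕ) hlj (by omega)
          rw [hdNeq j₁] at h1
          exact hBle _ (by omega) (by omega) (by omega)
        · have htc : t ≤ cN l := by
            by_contra hcon
            have hEq := (hmk l (by omega)).1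
            have := hj₁.2 ⟨l, by omega⟩ (by rw [← hEq]; omega)
            rw [Fin.le_def] at this
            simp only at this
            omega
          rcases le_or_gt (j₂ : ℕ) l with hlj2 | hlj2
          · left
            have h1 : cN (j₂ : ℕ) ≤ cN l := hcNle _ _ hlj2 (by omega)
            rw [hcNeq j₂] at h1
            exact hAle _ (by omega) (by omega) (by omega)
          · have htd : t ≤ dN l := by
              by_contra hcon
              have hEq := (hmk l (by omega)).2
              have := hj₂.2 ⟨l, by omega⟩ (by rw [← hEq]; omega)
              rw [Fin.le_def] at this
              simp only at this
              omega
            rcases S2 hpY (l := l) hl1 hlκ with h | h <;> rcases S2 hqY (l := l) hl1 hlκ with h' | h'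
            · exact Or.inl (hAle _ (by omega) (by omega) (by omega))
            · rcases hco with e | e
              · exact Or.inl (hAle _ (by omega) (by omega) (by omega))
              · exact Or.inr (hBle _ (by omega) (by omega) (by omega))
            · rcases hco with e | e
              · exact Or.inl (hAle _ (by omega) (by omega) (by omega))
              · exact Or.inr (hBle _ (by omega) (by omega) (by omega))
            · exact Or.inr (hBle _ (by omega) (by omega) (by omega))
      have hrect := isMinor_rect ht Y' A B hAt hBt
        (fun x y hx1 hx2 hy1 hy2 =>
          hY'dc _ _ x y habY' (by omega) hx2 (by omega) hy2)
      have hpmem : (p1, p2) ∈ {p : ℕ × ℕ | A - t + 1 ≤ p.1 ∧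
          p.1 ≤ A ∧ B - t + 1 ≤ p.2 ∧ p.2 ≤ B} := by
        simp only [Set.mem_setOf_eq]
        have h1 := hArect.1
        have h2 := hBrect.1
        omega
      have hqmem : (q1, q2) ∈ {p : ℕ × ℕ | A - t + 1 ≤ p.1 ∧
          p.1 ≤ A ∧ B - t + 1 ≤ p.2 ∧ p.2 ≤ B} := by
        simp only [Set.mem_setOf_eq]
        have h1 := hArect.2
        have h2 := hBrect.2
        omega
      rcases hmQ _ hrect with hsub1 | hsub2
      · exact iff_of_true (hsub1 hpmem) (hsub1 hqmem)
      · refine iff_of_false (fun hh => ?_) (fun hh => ?_)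
        · have : (p1, p2) ∈ Z₁ ∩ Z₂ := ⟨hh, hsub2 hpmem⟩
          rw [hd] at this
          exact this
        · have : (q1, q2) ∈ Z₁ ∩ Z₂ := ⟨hh, hsub2 hqmem⟩
          rw [hd] at this
          exact this
    have hz1Y' : z1 ∈ Y' := by rw [← hu]; exact Set.mem_union_left _ hz1
    have hz2Y' : z2 ∈ Y' := by rw [← hu]; exact Set.mem_union_right _ hz2
    have key : ∀ q', Relation.ReflTransGen (fun a b => a ∈ Y' ∧ b ∈ Y' ∧ AdjStep a b) z1 q' →
        (z1 ∈ Z₁ ↔ q' ∈ Z₁) := by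
      intro q' h
      induction h with
      | refl => exact Iff.rfl
      | tail hs hstep ih => exact ih.trans (hAdjIff _ _ hstep.1 hstep.2.1 hstep.2.2)
    obtain ⟨-, -, hp12⟩ := hY'path z1 hz1Y' z2 hz2Y'
    have hz2Z₁ : z2 ∈ Z₁ := (key z2 hp12).1 hz1
    have : z2 ∈ Z₁ ∩ Z₂ := ⟨hz2Z₁, hz2⟩
    rw [hd] at this
    exact this
  -- no minor inside Z
  have hZnominor : ¬ ∃ M, IsMinor t Z M := by
    rintro ⟨M, r, cc, hr, hcc, hmemZ, -⟩
    have hZY : Z ⊆ Y := by rw [hZ]; exact Set.diff_subset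
    have h00 : (r ⟨0, ht0⟩, cc ⟨0, ht0⟩) ∈ Y' :=
      hminY' r cc hr hcc (fun u v => hZY (hmemZ u v)) _ _
    have hmem00 := hmemZ ⟨0, ht0⟩ ⟨0, ht0⟩
    rw [hZ] at hmem00
    exact hmem00.2 h00
  exact ⟨hj12, hY'ladder, ⟨hY'path, Or.inl hY'nolow⟩, hTConn, hZnominor,
    ladder_split K t Y Y' Z hY'sub hZ hminY'⟩

end LadderDet
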